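/- The function y(x) = 1/√(1+x) satisfies the nonlocal boundary value problem −p·y''(x) + (3(2√2−2)/4) y(x)⁵ = 0 on (0,1) with y(0) = 1, y(1) = √2/2, where p = ∫₀¹ y(s) ds = 2√2 − 2. -/

import Mathlib

private lemma sqrt_hd {x : ℝ} (hx : -1 < x) :
    HasDerivAt (fun t : ℝ => Real.sqrt (1 + t)) (1 / (2 * Real.sqrt (1 + x))) x := by
  have h1 : HasDerivAt (fun t : ℝ => 1 + t) 1 x := by
    simpa using (hasDerivAt_id x).const_add 1
  have h2 := (Real.hasDerivAt_sqrt (by linarith : (1 + x) ≠ 0)).comp x h1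
  exact h2.congr_deriv (by ring)

private lemma y_hd {x : ℝ} (hx : -1 < x) :
    HasDerivAt (fun t : ℝ => 1 / Real.sqrt (1 + t))
      (-(3 / (2 * (3 * (Real.sqrt (1 + x) * (1 + x)))))) x := by
  have hs : (0:ℝ) < Real.sqrt (1 + x) := Real.sqrt_pos.2 (by linarith)
  have h := (sqrt_hd hx).inv (ne_of_gt hs)
  have hsq : Real.sqrt (1 + x) ^ 2 = 1 + x := Real.sq_sqrt (by linarith)
  simp only [one_div]
  refine h.congr_deriv ?_
  set u := Real.sqrt (1 + x) with hu
  rw [← hsq]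
  field_simp

theorem inv_sqrt_solves_nonlocal_bvp_p :
    let y : ℝ → ℝ := fun x => 1 / Real.sqrt (1 + x)
    let p : ℝ := ∫ s in (0 : ℝ)..1, y s
    p = 2 * Real.sqrt 2 - 2 ∧
      (∀ x ∈ Set.Ioo (0 : ℝ) 1,
        -p * deriv (deriv y) x + 3 * (2 * Real.sqrt 2 - 2) / 4 * y x ^ 5 = 0) ∧
      y 0 = 1 ∧ y 1 = Real.sqrt 2 / 2 := by
  intro y p
  have hs2 : (0:ℝ) < Real.sqrt 2 := Real.sqrt_pos.2 (by norm_num)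
  have hy1 : y 1 = Real.sqrt 2 / 2 := by
    show 1 / Real.sqrt (1 + 1) = Real.sqrt 2 / 2
    rw [show (1:ℝ) + 1 = 2 by norm_num,
      div_eq_div_iff hs2.ne' (by norm_num : (2:ℝ) ≠ 0)]
    nlinarith [Real.sq_sqrt (by norm_num : (0:ℝ) ≤ 2)]
  have hp : p = 2 * Real.sqrt 2 - 2 := by
    have hInt : (∫ s in (0:ℝ)..1, 1 / Real.sqrt (1 + s))
        = (2 * Real.sqrt (1 + 1)) - (2 * Real.sqrt (1 + 0)) := by
      apply intervalIntegral.integral_eq_sub_of_hasDerivAt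
        (f := fun t => 2 * Real.sqrt (1 + t))
      · intro x hx
        rw [Set.uIcc_of_le (by norm_num)] at hx
        have hs : (0:ℝ) < Real.sqrt (1 + x) := Real.sqrt_pos.2 (by linarith [hx.1])
        have h := (sqrt_hd (by linarith [hx.1] : (-1:ℝ) < x)).const_mul 2
        refine h.congr_deriv ?_
        field_simp
      · apply ContinuousOn.intervalIntegrable
        apply ContinuousOn.div continuousOn_const
        · exact (Real.continuous_sqrt.comp (by continuity)).continuousOn
        · intro x hx
          rw [Set.uIcc_of_le (by norm_num)] at hx
          exact ne_of_gt (Real.sqrt_pos.2 (by linarith [hx.1]))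
    show (∫ s in (0:ℝ)..1, 1 / Real.sqrt (1 + s)) = 2 * Real.sqrt 2 - 2
    rw [hInt, show (1:ℝ) + 1 = 2 by norm_num, show (1:ℝ) + 0 = 1 by norm_num,
      Real.sqrt_one]
    ring
  refine ⟨hp, ?_, by simp [y], hy1⟩
  intro x hx
  obtain ⟨hx0, hx1⟩ := hx
  have hxm1 : (-1:ℝ) < x := by linarith
  have hs : (0:ℝ) < Real.sqrt (1 + x) := Real.sqrt_pos.2 (by linarith)
  have hsq : Real.sqrt (1 + x) ^ 2 = 1 + x := Real.sq_sqrt (by linarith)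
  set g : ℝ → ℝ := fun t => -(3 / (2 * (3 * (Real.sqrt (1 + t) * (1 + t))))) with hg
  have hev : deriv y =ᶠ[nhds x] g := by
    filter_upwards [eventually_gt_nhds hxm1] with t ht
    exact (y_hd ht).deriv
  have hdd : deriv (deriv y) x = deriv g x := Filter.EventuallyEq.deriv_eq hev
  have hgd : HasDerivAt g (3 / (4 * (1 + x) ^ 2 * Real.sqrt (1 + x))) x := by
    have h1 : HasDerivAt (fun t : ℝ => 1 + t) 1 x := by
      simpa using (hasDerivAt_id x).const_add 1
    have hh : HasDerivAt (fun t : ℝ => 2 * (3 * (Real.sqrt (1 + t) * (1 + t))))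
        (2 * (3 * (1 / (2 * Real.sqrt (1 + x)) * (1 + x) + Real.sqrt (1 + x) * 1))) x :=
      (((sqrt_hd hxm1).mul h1).const_mul 3).const_mul 2
    have hhne : 2 * (3 * (Real.sqrt (1 + x) * (1 + x))) ≠ 0 := by positivity
    have h := ((hh.inv hhne).const_mul 3).neg
    refine h.congr_deriv ?_
    set u := Real.sqrt (1 + x) with hu
    rw [← hsq]
    field_simp
    ring
  rw [hdd, hgd.deriv]
  show -p * (3 / (4 * (1 + x) ^ 2 * Real.sqrt (1 + x)))
      + 3 * (2 * Real.sqrt 2 - 2) / 4 * (1 / Real.sqrt (1 + x)) ^ 5 = 0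
  rw [← hp]
  set u := Real.sqrt (1 + x) with hu
  rw [← hsq]
  field_simp
  ring
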